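/- Let κ be an uncountable regular cardinal, A a category with colimits of countable chains, U an object of A, and K₁ : D₁ → A, K₂ : D₂ → A two functors such that each D_i is κ-filtered with countable filtered colimits, each K_i takes values in κ-presentable objects, preserves countable filtered colimits, and has colimit U (with colimit cocones u_i). Then for any s₁ ∈ D₁ and s₂ ∈ D₂ there exist morphisms s₁ → t₁ in D₁ and s₂ → t₂ in D₂ such that the colimit components K₁(t₁) → U and K₂(t₂) → U are isomorphic as objects of the slice category A/U. -/

import Mathlib

open CategoryTheory Limits Cardinal

universe v u u'

/-- A small category `J` is `κ`-filtered if every diagram over an index category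
with fewer than `κ` morphisms admits a cocone in `J`. -/
def IsCardFiltered (κ : Cardinal.{v}) (J : Type v) [SmallCategory J] : Prop :=
  ∀ (K : Type v) [SmallCategory K], #(Σ p : K × K, p.1 ⟶ p.2) < κ →
    ∀ F : K ⥤ J, Nonempty (Cocone F)

/-- An object `X` is `κ`-presentable if `Hom(X, -)` preserves `κ`-filtered colimits. -/
def IsPresObj (κ : Cardinal.{v}) {C : Type u} [Category.{v} C] (X : C) : Prop :=
  ∀ (J : Type v) [SmallCategory J], IsCardFiltered κ J →
    ∀ (D : J ⥤ C) (c : Cocone D), Nonempty (IsColimit c) →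
      Nonempty (IsColimit ((coyoneda.obj (Opposite.op X)).mapCocone c))

/-- The presentability rank of `X`: the least `κ` such that `X` is `κ`-presentable. -/
noncomputable def presRank {C : Type u} [Category.{v} C] (X : C) : Cardinal.{v} :=
  sInf {κ : Cardinal.{v} | IsPresObj κ X}

/-- A presentation of `X` as a `κ`-filtered colimit of objects from `S`. -/
structure CardFilteredPresentation (κ : Cardinal.{v}) {C : Type u} [Category.{v} C]
    (S : Set C) (X : C) where
  J : Type v
  [instJ : SmallCategory J]
  filtered : IsCardFiltered κ J
  D : J ⥤ C
  memS : ∀ j : J, D.obj j ∈ S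
  cocone : Cocone D
  isColimit : IsColimit cocone
  iso : cocone.pt ≅ X

attribute [instance] CardFilteredPresentation.instJ

/-- A category is `κ`-accessible if it has `κ`-filtered colimits and a set of
`κ`-presentable objects of which every object is a `κ`-filtered colimit. -/
def IsAccessibleCat (κ : Cardinal.{v}) (C : Type u) [Category.{v} C] : Prop :=
  (∀ (J : Type v) [SmallCategory J], IsCardFiltered κ J →
      ∀ D : J ⥤ C, ∃ c : Cocone D, Nonempty (IsColimit c)) ∧
  ∃ S : Set C, (∀ X ∈ S, IsPresObj κ X) ∧
    ∀ X : C, Nonempty (CardFilteredPresentation κ S X)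

/-- `C` has all filtered colimits. -/
def HasFilteredColimitsP (C : Type u) [Category.{v} C] : Prop :=
  ∀ (J : Type v) [SmallCategory J], IsFiltered J →
    ∀ D : J ⥤ C, ∃ c : Cocone D, Nonempty (IsColimit c)

/-- `F` preserves filtered colimits. -/
def PreservesFilteredColimitsP {A : Type u} [Category.{v} A] {B : Type u'}
    [Category.{v} B] (F : A ⥤ B) : Prop :=
  ∀ (J : Type v) [SmallCategory J], IsFiltered J →
    ∀ (D : J ⥤ A) (c : Cocone D), Nonempty (IsColimit c) →
      Nonempty (IsColimit (F.mapCocone c))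

/-- A `κ`-filtered category with `κ` uncountable is filtered. -/
lemma isFiltered_of_isCardFiltered {κ : Cardinal.{v}} (hunc : ℵ₀ < κ)
    {J : Type v} [SmallCategory J] (hJ : IsCardFiltered κ J) : IsFiltered J := by
  apply IsFiltered.of_cocone_nonempty.{v}
  intro K _ _ F
  exact hJ K (lt_trans (Cardinal.lt_aleph0_of_finite _) hunc) F

/-- Maps out of a `κ`-presentable object into a `κ`-filtered colimit factor
through a stage. -/
lemma pres_factor {A : Type u} [Category.{v} A] {κ : Cardinal.{v}}
    {J : Type v} [SmallCategory J] (hJ : IsCardFiltered κ J)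
    {K : J ⥤ A} {c : Cocone K} (hc : IsColimit c) {X : A} (hX : IsPresObj κ X)
    (f : X ⟶ c.pt) : ∃ (j : J) (g : X ⟶ K.obj j), g ≫ c.ι.app j = f := by
  obtain ⟨hc'⟩ := hX J hJ K c ⟨hc⟩
  obtain ⟨j, g, hg⟩ := Types.jointly_surjective _ hc' f
  exact ⟨j, g, hg⟩

/-- Two maps out of a `κ`-presentable object into stages of a `κ`-filtered
colimit which agree at the colimit agree at some later stage. -/
lemma pres_equalize {A : Type u} [Category.{v} A] {κ : Cardinal.{v}}
    {J : Type v} [SmallCategory J] (hJ : IsCardFiltered κ J) (hfil : IsFiltered J)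
    {K : J ⥤ A} {c : Cocone K} (hc : IsColimit c) {X : A} (hX : IsPresObj κ X)
    {j j' : J} (g : X ⟶ K.obj j) (g' : X ⟶ K.obj j')
    (h : g ≫ c.ι.app j = g' ≫ c.ι.app j') :
    ∃ (k : J) (p : j ⟶ k) (q : j' ⟶ k), g ≫ K.map p = g' ≫ K.map q := by
  obtain ⟨hc'⟩ := hX J hJ K c ⟨hc⟩
  have h' : ((coyoneda.obj (Opposite.op X)).mapCocone c).ι.app j g =
      ((coyoneda.obj (Opposite.op X)).mapCocone c).ι.app j' g' := h
  rw [Types.FilteredColimit.isColimit_eq_iff _ hc'] at h'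
  obtain ⟨k, p, q, hpq⟩ := h'
  exact ⟨k, p, q, hpq⟩

/-- The back-and-forth fixed point lemma: if `κ` is uncountable regular, `A` has
colimits of countable chains, and `K₁ : D₁ ⥤ A`, `K₂ : D₂ ⥤ A` are functors from
`κ`-filtered categories with countable chain colimits, taking `κ`-presentable
values, preserving countable chain colimits, and both with colimit `U`, then any
`s₁ ∈ D₁`, `s₂ ∈ D₂` admit maps `s₁ ⟶ t₁`, `s₂ ⟶ t₂` such that the colimit
components `K₁ t₁ ⟶ U` and `K₂ t₂ ⟶ U` are isomorphic in the slice category `A/U`. -/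
theorem back_and_forth_fixed_points {A : Type u} [Category.{v} A]
    (κ : Cardinal.{v}) (hreg : κ.IsRegular) (hunc : ℵ₀ < κ)
    (hA : ∀ D : ℕ ⥤ A, ∃ c : Cocone D, Nonempty (IsColimit c))
    (U : A)
    (D₁ : Type v) [SmallCategory D₁] (D₂ : Type v) [SmallCategory D₂]
    (hD₁ : IsCardFiltered κ D₁) (hD₂ : IsCardFiltered κ D₂)
    (hD₁c : ∀ E : ℕ ⥤ D₁, ∃ c : Cocone E, Nonempty (IsColimit c))
    (hD₂c : ∀ E : ℕ ⥤ D₂, ∃ c : Cocone E, Nonempty (IsColimit c))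
    (K₁ : D₁ ⥤ A) (K₂ : D₂ ⥤ A)
    (hK₁p : ∀ d : D₁, IsPresObj κ (K₁.obj d)) (hK₂p : ∀ d : D₂, IsPresObj κ (K₂.obj d))
    (hK₁pres : ∀ (E : ℕ ⥤ D₁) (c : Cocone E), IsColimit c →
      Nonempty (IsColimit (K₁.mapCocone c)))
    (hK₂pres : ∀ (E : ℕ ⥤ D₂) (c : Cocone E), IsColimit c →
      Nonempty (IsColimit (K₂.mapCocone c)))
    (c₁ : Cocone K₁) (h₁ : IsColimit c₁) (hpt₁ : c₁.pt = U)
    (c₂ : Cocone K₂) (h₂ : IsColimit c₂) (hpt₂ : c₂.pt = U)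
    (s₁ : D₁) (s₂ : D₂) :
    ∃ (t₁ : D₁) (t₂ : D₂), Nonempty (s₁ ⟶ t₁) ∧ Nonempty (s₂ ⟶ t₂) ∧
      ∃ e : K₁.obj t₁ ≅ K₂.obj t₂,
        e.hom ≫ c₂.ι.app t₂ ≫ eqToHom hpt₂ = c₁.ι.app t₁ ≫ eqToHom hpt₁ := by
  have hfil₁ : IsFiltered D₁ := isFiltered_of_isCardFiltered hunc hD₁
  have hfil₂ : IsFiltered D₂ := isFiltered_of_isCardFiltered hunc hD₂
  -- Components of cocones with point `U`.
  let ψ₁f : ∀ j : D₁, K₁.obj j ⟶ U := fun j => c₁.ι.app j ≫ eqToHom hpt₁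
  let ψ₂f : ∀ j : D₂, K₂.obj j ⟶ U := fun j => c₂.ι.app j ≫ eqToHom hpt₂
  have w₁ : ∀ {j j' : D₁} (f : j ⟶ j'), K₁.map f ≫ ψ₁f j' = ψ₁f j := by
    intro j j' f
    show K₁.map f ≫ (c₁.ι.app j' ≫ eqToHom hpt₁) = c₁.ι.app j ≫ eqToHom hpt₁
    rw [← Category.assoc, c₁.w]
  have w₂ : ∀ {j j' : D₂} (f : j ⟶ j'), K₂.map f ≫ ψ₂f j' = ψ₂f j := by
    intro j j' f
    show K₂.map f ≫ (c₂.ι.app j' ≫ eqToHom hpt₂) = c₂.ι.app j ≫ eqToHom hpt₂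
    rw [← Category.assoc, c₂.w]
  -- Replace the colimit cocones by cocones with point `U`.
  let c₁' : Cocone K₁ :=
    ⟨U, ⟨ψ₁f, by intro j j' f; simpa using w₁ f⟩⟩
  let c₂' : Cocone K₂ :=
    ⟨U, ⟨ψ₂f, by intro j j' f; simpa using w₂ f⟩⟩
  have h₁' : IsColimit c₁' := h₁.ofIsoColimit (Cocones.ext (eqToIso hpt₁) (fun j => rfl))
  have h₂' : IsColimit c₂' := h₂.ofIsoColimit (Cocones.ext (eqToIso hpt₂) (fun j => rfl))
  have factor₁ : ∀ {Z : A}, IsPresObj κ Z → ∀ f : Z ⟶ U,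
      ∃ (j : D₁) (g : Z ⟶ K₁.obj j), g ≫ ψ₁f j = f := by
    intro Z hZ f
    obtain ⟨j, g, hg⟩ := pres_factor hD₁ h₁' hZ f
    exact ⟨j, g, hg⟩
  have factor₂ : ∀ {Z : A}, IsPresObj κ Z → ∀ f : Z ⟶ U,
      ∃ (j : D₂) (g : Z ⟶ K₂.obj j), g ≫ ψ₂f j = f := by
    intro Z hZ f
    obtain ⟨j, g, hg⟩ := pres_factor hD₂ h₂' hZ f
    exact ⟨j, g, hg⟩
  have equalize₁ : ∀ {Z : A}, IsPresObj κ Z → ∀ {j j' : D₁} (g : Z ⟶ K₁.obj j)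
      (g' : Z ⟶ K₁.obj j'), g ≫ ψ₁f j = g' ≫ ψ₁f j' →
      ∃ (k : D₁) (p : j ⟶ k) (q : j' ⟶ k), g ≫ K₁.map p = g' ≫ K₁.map q := by
    intro Z hZ j j' g g' h
    exact pres_equalize hD₁ hfil₁ h₁' hZ g g' h
  have equalize₂ : ∀ {Z : A}, IsPresObj κ Z → ∀ {j j' : D₂} (g : Z ⟶ K₂.obj j)
      (g' : Z ⟶ K₂.obj j'), g ≫ ψ₂f j = g' ≫ ψ₂f j' →
      ∃ (k : D₂) (p : j ⟶ k) (q : j' ⟶ k), g ≫ K₂.map p = g' ≫ K₂.map q := by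
    intro Z hZ j j' g g' h
    exact pres_equalize hD₂ hfil₂ h₂' hZ g g' h
  -- The one-sided steps.
  have key₁ : ∀ (x : D₁) (y : D₂) (a : K₁.obj x ⟶ K₂.obj y),
      a ≫ ψ₂f y = ψ₁f x →
      ∃ (x' : D₁) (u : x ⟶ x') (b : K₂.obj y ⟶ K₁.obj x'),
        a ≫ b = K₁.map u ∧ b ≫ ψ₁f x' = ψ₂f y := by
    intro x y a ha
    obtain ⟨x₀, g, hg⟩ := factor₁ (hK₂p y) (ψ₂f y)
    have heq : (a ≫ g) ≫ ψ₁f x₀ = 𝟙 (K₁.obj x) ≫ ψ₁f x := by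
      rw [Category.id_comp, Category.assoc, hg, ha]
    obtain ⟨k, p, q, hpq⟩ := equalize₁ (hK₁p x) _ _ heq
    refine ⟨k, q, g ≫ K₁.map p, ?_, ?_⟩
    · rw [← Category.assoc, hpq, Category.id_comp]
    · rw [Category.assoc, w₁ p, hg]
  have key₂ : ∀ (y : D₂) (x : D₁) (b : K₂.obj y ⟶ K₁.obj x),
      b ≫ ψ₁f x = ψ₂f y →
      ∃ (y' : D₂) (v : y ⟶ y') (a : K₁.obj x ⟶ K₂.obj y'),
        b ≫ a = K₂.map v ∧ a ≫ ψ₂f y' = ψ₁f x := by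
    intro y x b hb
    obtain ⟨y₀, g, hg⟩ := factor₂ (hK₁p x) (ψ₁f x)
    have heq : (b ≫ g) ≫ ψ₂f y₀ = 𝟙 (K₂.obj y) ≫ ψ₂f y := by
      rw [Category.id_comp, Category.assoc, hg, hb]
    obtain ⟨k, p, q, hpq⟩ := equalize₂ (hK₂p y) _ _ heq
    refine ⟨k, q, g ≫ K₂.map p, ?_, ?_⟩
    · rw [← Category.assoc, hpq, Category.id_comp]
    · rw [Category.assoc, w₂ p, hg]
  -- The combined back-and-forth step.
  have step : ∀ (x : D₁) (y : D₂) (a : K₁.obj x ⟶ K₂.obj y),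
      a ≫ ψ₂f y = ψ₁f x →
      ∃ (x' : D₁) (y' : D₂) (a' : K₁.obj x' ⟶ K₂.obj y') (u : x ⟶ x')
        (v : y ⟶ y') (b : K₂.obj y ⟶ K₁.obj x'),
        a' ≫ ψ₂f y' = ψ₁f x' ∧ a ≫ b = K₁.map u ∧
        b ≫ ψ₁f x' = ψ₂f y ∧ b ≫ a' = K₂.map v := by
    intro x y a ha
    obtain ⟨x', u, b, hab, hb⟩ := key₁ x y a ha
    obtain ⟨y', v, a', hba, ha'⟩ := key₂ y x' b hb
    exact ⟨x', y', a', u, v, b, ha', hab, hb, hba⟩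
  choose fx fy fa fu fv fb h_a h_ab h_b h_ba using step
  -- The initial stage.
  obtain ⟨y', g, hg⟩ := factor₂ (hK₁p s₁) (ψ₁f s₁)
  have ha0 : (g ≫ K₂.map (IsFiltered.rightToMax s₂ y')) ≫
      ψ₂f (IsFiltered.max s₂ y') = ψ₁f s₁ := by
    rw [Category.assoc, w₂, hg]
  -- The countable chain of stages.
  let T := Σ' (x : D₁) (y : D₂) (a : K₁.obj x ⟶ K₂.obj y), a ≫ ψ₂f y = ψ₁f x
  let nextT : T → T := fun t =>
    ⟨fx t.1 t.2.1 t.2.2.1 t.2.2.2, fy t.1 t.2.1 t.2.2.1 t.2.2.2,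
      fa t.1 t.2.1 t.2.2.1 t.2.2.2, h_a t.1 t.2.1 t.2.2.1 t.2.2.2⟩
  let chain : ℕ → T := fun n => Nat.rec
    (⟨s₁, IsFiltered.max s₂ y', g ≫ K₂.map (IsFiltered.rightToMax s₂ y'), ha0⟩ : T)
    (fun _ t => nextT t) n
  let umap : ∀ n : ℕ, (chain n).1 ⟶ (chain (n + 1)).1 :=
    fun n => fu (chain n).1 (chain n).2.1 (chain n).2.2.1 (chain n).2.2.2
  let vmap : ∀ n : ℕ, (chain n).2.1 ⟶ (chain (n + 1)).2.1 :=
    fun n => fv (chain n).1 (chain n).2.1 (chain n).2.2.1 (chain n).2.2.2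
  let bmap : ∀ n : ℕ, K₂.obj (chain n).2.1 ⟶ K₁.obj (chain (n + 1)).1 :=
    fun n => fb (chain n).1 (chain n).2.1 (chain n).2.2.1 (chain n).2.2.2
  have hab : ∀ n, (chain n).2.2.1 ≫ bmap n = K₁.map (umap n) :=
    fun n => h_ab (chain n).1 (chain n).2.1 (chain n).2.2.1 (chain n).2.2.2
  have hba : ∀ n, bmap n ≫ (chain (n + 1)).2.2.1 = K₂.map (vmap n) :=
    fun n => h_ba (chain n).1 (chain n).2.1 (chain n).2.2.1 (chain n).2.2.2
  -- Colimits of the chains.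
  let E₁ : ℕ ⥤ D₁ := Functor.ofSequence umap
  let E₂ : ℕ ⥤ D₂ := Functor.ofSequence vmap
  obtain ⟨d₁, ⟨hd₁⟩⟩ := hD₁c E₁
  obtain ⟨d₂, ⟨hd₂⟩⟩ := hD₂c E₂
  obtain ⟨hA1⟩ := hK₁pres E₁ d₁ hd₁
  obtain ⟨hA2⟩ := hK₂pres E₂ d₂ hd₂
  have hov : ∀ n, (chain n).2.2.1 ≫ ψ₂f (E₂.obj n) = ψ₁f (E₁.obj n) :=
    fun n => (chain n).2.2.2
  have hd₁w : ∀ n : ℕ, umap n ≫ d₁.ι.app (n + 1) = d₁.ι.app n := fun n => by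
    rw [← Functor.ofSequence_map_homOfLE_succ umap n]; exact d₁.w _
  have hd₂w : ∀ n : ℕ, vmap n ≫ d₂.ι.app (n + 1) = d₂.ι.app n := fun n => by
    rw [← Functor.ofSequence_map_homOfLE_succ vmap n]; exact d₂.w _
  -- The interleaving morphisms.
  let cocφ : Cocone (E₁ ⋙ K₁) :=
    ⟨K₂.obj d₂.pt, NatTrans.ofSequence
      (fun n => (chain n).2.2.1 ≫ K₂.map (d₂.ι.app n)) (by
        intro n
        simp only [Functor.const_obj_obj, Functor.const_obj_map, Category.comp_id,
          Functor.comp_map]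
        rw [show E₁.map (homOfLE (n.le_add_right 1)) = umap n from
          Functor.ofSequence_map_homOfLE_succ umap n]
        erw [← hab n, Category.assoc, reassoc_of% (hba n), ← Functor.map_comp,
          hd₂w n])⟩
  let cocψ : Cocone (E₂ ⋙ K₂) :=
    ⟨K₁.obj d₁.pt, NatTrans.ofSequence
      (fun n => bmap n ≫ K₁.map (d₁.ι.app (n + 1))) (by
        intro n
        simp only [Functor.const_obj_obj, Functor.const_obj_map, Category.comp_id,
          Functor.comp_map]
        rw [show E₂.map (homOfLE (n.le_add_right 1)) = vmap n from
          Functor.ofSequence_map_homOfLE_succ vmap n]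
        erw [← hba n, Category.assoc, reassoc_of% (hab (n + 1)), ← Functor.map_comp,
          hd₁w (n + 1)])⟩
  let φ : K₁.obj d₁.pt ⟶ K₂.obj d₂.pt := hA1.desc cocφ
  let ψ : K₂.obj d₂.pt ⟶ K₁.obj d₁.pt := hA2.desc cocψ
  have hφ : ∀ n : ℕ, K₁.map (d₁.ι.app n) ≫ φ = (chain n).2.2.1 ≫ K₂.map (d₂.ι.app n) :=
    fun n => hA1.fac cocφ n
  have hψ : ∀ n : ℕ, K₂.map (d₂.ι.app n) ≫ ψ = bmap n ≫ K₁.map (d₁.ι.app (n + 1)) :=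
    fun n => hA2.fac cocψ n
  have hφψ : φ ≫ ψ = 𝟙 _ := by
    apply hA1.hom_ext
    intro n
    have : K₁.map (d₁.ι.app n) ≫ φ ≫ ψ = K₁.map (d₁.ι.app n) := by
      erw [← Category.assoc, hφ n, Category.assoc, hψ n, ← Category.assoc, hab n,
        ← Functor.map_comp, hd₁w n]
      rfl
    simpa using this
  have hψφ : ψ ≫ φ = 𝟙 _ := by
    apply hA2.hom_ext
    intro n
    have : K₂.map (d₂.ι.app n) ≫ ψ ≫ φ = K₂.map (d₂.ι.app n) := by
      erw [← Category.assoc, hψ n, Category.assoc, hφ (n + 1), ← Category.assoc, hba n,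
        ← Functor.map_comp, hd₂w n]
      rfl
    simpa using this
  have comp : ∀ n : ℕ, K₁.map (d₁.ι.app n) ≫ φ ≫ ψ₂f d₂.pt =
      K₁.map (d₁.ι.app n) ≫ ψ₁f d₁.pt := by
    intro n
    erw [← Category.assoc, hφ n, Category.assoc]
    erw [w₂ (d₂.ι.app n), hov n, w₁]
  have final : φ ≫ ψ₂f d₂.pt = ψ₁f d₁.pt := hA1.hom_ext (fun n => comp n)
  exact ⟨d₁.pt, d₂.pt, ⟨d₁.ι.app 0⟩, ⟨IsFiltered.leftToMax s₂ y' ≫ d₂.ι.app 0⟩,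
    ⟨φ, ψ, hφψ, hψφ⟩, final⟩
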